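/- Let k ≥ 2, s with 3 ≤ s ≤ k−1, and let H be a (k−s)-regular graph on k−1 vertices. Then the graph G = K_s ∨ (K_{n−k−s+1} + H), for n sufficiently large (n ≥ 11k), is Hamilton-connected. -/

import Mathlib

open Classical SimpleGraph

noncomputable section

/-- Degree of a vertex (via `Set.ncard`, avoiding decidability assumptions). -/
noncomputable def gdeg {V : Type*} (G : SimpleGraph V) (v : V) : ℕ :=
  (G.neighborSet v).ncard

/-- A graph is Hamilton-connected if every two distinct vertices are joined by a
Hamiltonian path. -/
def HamConnected {V : Type*} (G : SimpleGraph V) : Prop :=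
  ∀ u v : V, u ≠ v → ∃ p : G.Walk u v, p.IsHamiltonian

/-- The join `G ∨ H` of two graphs: disjoint union plus all edges between the parts. -/
noncomputable def graphJoin {α β : Type*} (G : SimpleGraph α) (H : SimpleGraph β) :
    SimpleGraph (α ⊕ β) :=
  (G ⊕g H) ⊔ SimpleGraph.fromRel (fun x y => x.isLeft ∧ y.isRight)

namespace HamAux
open List

variable {V : Type*}

lemma walk_of_list (G : SimpleGraph V) :
    ∀ (l : List V) (u v : V), (u :: l).IsChain G.Adj → (u :: l).getLast? = some v →
      ∃ p : G.Walk u v, p.support = u :: l := by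
  intro l
  induction l with
  | nil =>
    intro u v _ hl
    simp only [getLast?_singleton, Option.some.injEq] at hl
    subst hl
    exact ⟨SimpleGraph.Walk.nil, by simp⟩
  | cons w l ih =>
    intro u v hc hl
    rw [List.isChain_cons_cons] at hc
    obtain ⟨p, hp⟩ := ih w v hc.2 (by simpa using hl)
    exact ⟨SimpleGraph.Walk.cons hc.1 p, by simp [hp]⟩

lemma ham_of_list [DecidableEq V] (G : SimpleGraph V) (u v : V) (l : List V)
    (hc : l.IsChain G.Adj) (hh : l.head? = some u) (hl : l.getLast? = some v)
    (hn : l.Nodup) (hm : ∀ x, x ∈ l) : ∃ p : G.Walk u v, p.IsHamiltonian := by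
  cases l with
  | nil => simp at hh
  | cons a l =>
    simp only [head?_cons, Option.some.injEq] at hh
    subst hh
    obtain ⟨p, hp⟩ := walk_of_list G l a v hc hl
    refine ⟨p, fun x => ?_⟩
    rw [hp]
    exact List.count_eq_one_of_mem hn (hm x)


def glue (cs : List V) (Bs : List (List V)) : List V :=
  (cs.zip Bs).flatMap (fun p => p.1 :: p.2)

@[simp] lemma glue_nil_left (Bs : List (List V)) : glue ([] : List V) Bs = [] := by
  simp [glue]

@[simp] lemma glue_cons (c : V) (cs : List V) (B : List V) (Bs : List (List V)) :
    glue (c :: cs) (B :: Bs) = c :: (B ++ glue cs Bs) := by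
  simp [glue]

lemma glue_head : ∀ (cs : List V) (Bs : List (List V)), cs.length = Bs.length →
    (glue cs Bs).head? = cs.head? := by
  intro cs
  cases cs with
  | nil => intro Bs _; simp
  | cons c cs =>
    intro Bs hlen
    cases Bs with
    | nil => simp at hlen
    | cons B Bs => simp

lemma glue_perm : ∀ (cs : List V) (Bs : List (List V)), cs.length = Bs.length →
    glue cs Bs ~ cs ++ Bs.flatten := by
  intro cs
  induction cs with
  | nil =>
    intro Bs hlen
    cases Bs with
    | nil => simp
    | cons B Bs => simp at hlen
  | cons c cs ih =>
    intro Bs hlen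
    cases Bs with
    | nil => simp at hlen
    | cons B Bs =>
      simp only [length_cons, Nat.succ.injEq] at hlen
      rw [glue_cons]
      refine List.Perm.cons c ?_
      calc B ++ glue cs Bs ~ B ++ (cs ++ Bs.flatten) := List.Perm.append_left B (ih Bs hlen)
        _ ~ (cs ++ Bs.flatten) ++ B := List.perm_append_comm
        _ ~ cs ++ (Bs.flatten ++ B) := by rw [List.append_assoc]
        _ ~ cs ++ (B ++ Bs.flatten) := List.Perm.append_left cs List.perm_append_comm
        _ = cs ++ (B :: Bs).flatten := by simp

lemma glue_chain' (G : SimpleGraph V) :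
    ∀ (cs : List V) (Bs : List (List V)), cs.length = Bs.length →
      (∀ c ∈ cs, ∀ y, y ≠ c → G.Adj c y) →
      (∀ B ∈ Bs, B.IsChain G.Adj) →
      (glue cs Bs).Nodup →
      (glue cs Bs).IsChain G.Adj := by
  intro cs
  induction cs with
  | nil => intro Bs _ _ _ _; simp
  | cons c cs ih =>
    intro Bs hlen huniv hch hnd
    cases Bs with
    | nil => simp at hlen
    | cons B Bs =>
      simp only [length_cons, Nat.succ.injEq] at hlen
      rw [glue_cons] at hnd ⊢
      rw [List.isChain_cons]
      constructor
      · intro y hy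
        have hymem : y ∈ B ++ glue cs Bs := List.mem_of_mem_head? hy
        have hne : y ≠ c := by
          rintro rfl
          exact (List.nodup_cons.1 hnd).1 hymem
        exact huniv c (by simp) y hne
      · have hnd2 : (B ++ glue cs Bs).Nodup := (List.nodup_cons.1 hnd).2
        rw [List.isChain_append]
        refine ⟨hch B (by simp), ih Bs hlen ?_ ?_ ?_, ?_⟩
        · exact fun c' hc' => huniv c' (by simp [hc'])
        · exact fun B' hB' => hch B' (by simp [hB'])
        · exact ((List.nodup_append'.1 hnd2).2).1
        · intro x hx y hy
          rw [glue_head cs Bs hlen] at hy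
          have hyc : y ∈ cs := List.mem_of_mem_head? hy
          have hxB : x ∈ B := List.mem_of_mem_getLast? hx
          have hyg : y ∈ glue cs Bs := by
            rw [← glue_head cs Bs hlen] at hy
            exact List.mem_of_mem_head? hy
          have hne : x ≠ y := by
            intro h
            exact ((List.nodup_append'.1 hnd2).2).2 hxB (h ▸ hyg)
          exact (huniv y (by simp [hyc]) x hne).symm


section Greedy
variable {W : Type*} [DecidableEq W]

lemma greedy (H : SimpleGraph W) (S : Finset W) :
    ∀ w ∉ S, ∃ (l : List W) (R : Finset W) (e : W),
      l.head? = some w ∧ l.getLast? = some e ∧ l.IsChain H.Adj ∧ l.Nodup ∧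
      R ⊆ S ∧ (∀ x, x ∈ l ↔ (x = w ∨ x ∈ S) ∧ x ∉ R) ∧
      (∀ r ∈ R, ¬ H.Adj e r) := by
  induction S using Finset.strongInduction with
  | _ S ih =>
    intro w hw
    by_cases h : ∃ x ∈ S, H.Adj w x
    · obtain ⟨x, hx, hadj⟩ := h
      obtain ⟨l, R, e, hh, hl, hc, hnd, hRS, hmem, hR⟩ :=
        ih (S.erase x) (Finset.erase_ssubset hx) x (Finset.notMem_erase x S)
      have hwl : w ∉ l := by
        intro hwl
        rcases (hmem w).1 hwl with ⟨h1, _⟩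
        rcases h1 with h1 | h1
        · exact hw (h1 ▸ hx)
        · exact hw (Finset.mem_of_mem_erase h1)
      have hlne : l ≠ [] := by rintro rfl; simp at hh
      refine ⟨w :: l, R, e, by simp, ?_, ?_, ?_, ?_, ?_, hR⟩
      · exact List.mem_getLast?_cons hl
      · rw [List.isChain_cons]
        exact ⟨fun y hy => by rw [hh] at hy; exact (Option.some_inj.1 hy) ▸ hadj, hc⟩
      · exact List.nodup_cons.2 ⟨hwl, hnd⟩
      · exact hRS.trans (Finset.erase_subset x S)
      · intro y
        constructor
        · intro hy
          rcases List.mem_cons.1 hy with rfl | hy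
          · refine ⟨Or.inl rfl, fun hyR => hw (hRS.trans (Finset.erase_subset x S) hyR)⟩
          · rcases (hmem y).1 hy with ⟨h1, h2⟩
            refine ⟨?_, h2⟩
            rcases h1 with rfl | h1
            · exact Or.inr hx
            · exact Or.inr (Finset.mem_of_mem_erase h1)
        · rintro ⟨h1, h2⟩
          rcases h1 with rfl | h1
          · exact List.mem_cons_self
          · by_cases hyx : y = x
            · subst hyx
              exact List.mem_cons_of_mem _ ((hmem y).2 ⟨Or.inl rfl, h2⟩)
            · exact List.mem_cons_of_mem _
                ((hmem y).2 ⟨Or.inr (Finset.mem_erase.2 ⟨hyx, h1⟩), h2⟩)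
    · push_neg at h
      refine ⟨[w], S, w, rfl, rfl, by simp, by simp, le_refl _, ?_, h⟩
      intro y
      simp only [List.mem_singleton]
      constructor
      · rintro rfl; exact ⟨Or.inl rfl, hw⟩
      · rintro ⟨h1 | h1, h2⟩
        · exact h1
        · exact absurd h1 h2


end Greedy

lemma flatten_map_singleton (l : List V) : (l.map (fun x => [x])).flatten = l := by
  induction l with
  | nil => simp
  | cons a l ih => simp [ih]

lemma head_ne_getLast {l : List V} {a b : V} (hnd : l.Nodup) (ha : l.head? = some a)
    (hb : l.getLast? = some b) (hlen : 2 ≤ l.length) : a ≠ b := by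
  cases l with
  | nil => simp at ha
  | cons c t =>
    simp only [head?_cons, Option.some.injEq] at ha
    subst ha
    cases t with
    | nil => simp at hlen
    | cons d t' =>
      rw [List.getLast?_cons_cons] at hb
      have hbmem : b ∈ d :: t' := List.mem_of_mem_getLast? hb
      intro h
      exact (List.nodup_cons.1 hnd).1 (h ▸ hbmem)

section Cover

variable {kh s : ℕ}

lemma nbar_card (H : SimpleGraph (Fin kh)) (hs3 : 3 ≤ s) (hsk : s ≤ kh)
    (hreg : ∀ v, (H.neighborFinset v).card = kh + 1 - s) (e : Fin kh) :
    (Finset.univ \ insert e (H.neighborFinset e)).card = s - 2 := by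
  rw [Finset.card_sdiff_of_subset (Finset.subset_univ _), Finset.card_insert_of_notMem (by simp),
    hreg e, Finset.card_univ, Fintype.card_fin]
  omega

lemma R_sub_nbar (H : SimpleGraph (Fin kh)) {l : List (Fin kh)} {R : Finset (Fin kh)}
    {e : Fin kh} (hl : l.getLast? = some e)
    (hmem : ∀ x, x ∈ l → x ∉ R) (hR : ∀ r ∈ R, ¬ H.Adj e r) :
    R ⊆ Finset.univ \ insert e (H.neighborFinset e) := by
  intro r hr
  have hel : e ∈ l := List.mem_of_mem_getLast? hl
  simp only [Finset.mem_sdiff, Finset.mem_univ, Finset.mem_insert, true_and,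
    SimpleGraph.mem_neighborFinset]
  push_neg
  exact ⟨fun h => hmem e hel (h ▸ hr), hR r hr⟩

/-- Path cover of all of `Fin kh` into at most `s - 2` paths. -/
lemma cover2 (H : SimpleGraph (Fin kh)) (hs3 : 3 ≤ s) (hsk : s ≤ kh)
    (hreg : ∀ v, (H.neighborFinset v).card = kh + 1 - s) :
    ∃ LS : List (List (Fin kh)),
      (∀ B ∈ LS, B.IsChain H.Adj) ∧ LS.flatten.Nodup ∧
      (∀ x, x ∈ LS.flatten) ∧ LS.length + 2 ≤ s := by
  have hkpos : 0 < kh := by omega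
  set w0 : Fin kh := ⟨0, hkpos⟩ with hw0
  obtain ⟨l, R, e, hh, hl, hc, hnd, hRS, hmem, hR⟩ :=
    greedy H (Finset.univ.erase w0) w0 (Finset.notMem_erase _ _)
  have hmem' : ∀ x, x ∈ l ↔ x ∉ R := by
    intro x
    rw [hmem x]
    constructor
    · exact fun h => h.2
    · intro h
      refine ⟨?_, h⟩
      by_cases hx : x = w0
      · exact Or.inl hx
      · exact Or.inr (Finset.mem_erase.2 ⟨hx, Finset.mem_univ _⟩)
  have hRnb : R ⊆ Finset.univ \ insert e (H.neighborFinset e) :=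
    R_sub_nbar H hl (fun x hx => (hmem' x).1 hx) hR
  have hRcard : R.card ≤ s - 2 := by
    have := Finset.card_le_card hRnb
    rwa [nbar_card H hs3 hsk hreg e] at this
  have hlnd : l.Nodup := hnd
  have hdisj : ∀ x, x ∈ l → x ∉ R := fun x hx => (hmem' x).1 hx
  have hcover : ∀ x : Fin kh, x ∈ l ∨ x ∈ R := by
    intro x
    by_cases hx : x ∈ R
    · exact Or.inr hx
    · exact Or.inl ((hmem' x).2 hx)
  have hlcard : l.toFinset.card + R.card = kh := by
    have huniv : l.toFinset ∪ R = Finset.univ := by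
      apply Finset.eq_univ_iff_forall.2
      intro x
      rcases hcover x with h | h
      · exact Finset.mem_union.2 (Or.inl (List.mem_toFinset.2 h))
      · exact Finset.mem_union.2 (Or.inr h)
    have hdj : Disjoint l.toFinset R := by
      rw [Finset.disjoint_left]
      intro x hx
      exact hdisj x (List.mem_toFinset.1 hx)
    rw [← Finset.card_union_of_disjoint hdj, huniv, Finset.card_univ, Fintype.card_fin]
  have hllen : l.toFinset.card = l.length := List.toFinset_card_of_nodup hlnd
  by_cases hsmall : R.card + 1 ≤ s - 2
  · refine ⟨l :: R.toList.map (fun r => [r]), ?_, ?_, ?_, ?_⟩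
    · intro B hB
      rcases List.mem_cons.1 hB with rfl | hB
      · exact hc
      · obtain ⟨r, _, rfl⟩ := List.mem_map.1 hB
        simp
    · simp only [List.flatten_cons, flatten_map_singleton]
      rw [List.nodup_append']
      exact ⟨hlnd, R.nodup_toList, fun x hx hx2 => hdisj x hx (Finset.mem_toList.1 hx2)⟩
    · intro x
      simp only [List.flatten_cons, flatten_map_singleton, List.mem_append, Finset.mem_toList]
      exact hcover x
    · simp only [List.length_cons, List.length_map, Finset.length_toList]
      omega
  · have hRbig : R.card = s - 2 := by omega
    have hlen2 : 2 ≤ l.length := by omega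
    have hw0e : w0 ≠ e := head_ne_getLast hlnd hh hl hlen2
    have hw0l : w0 ∈ l := List.mem_of_mem_head? hh
    have hel : e ∈ l := List.mem_of_mem_getLast? hl
    by_cases hb : ∃ r ∈ R, H.Adj r w0
    · obtain ⟨r, hrR, hradj⟩ := hb
      refine ⟨(r :: l) :: (R.erase r).toList.map (fun x => [x]), ?_, ?_, ?_, ?_⟩
      · intro B hB
        rcases List.mem_cons.1 hB with rfl | hB
        · rw [List.isChain_cons]
          refine ⟨fun y hy => ?_, hc⟩
          rw [hh] at hy
          exact (Option.some_inj.1 hy) ▸ hradj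
        · obtain ⟨x, _, rfl⟩ := List.mem_map.1 hB
          simp
      · simp only [List.flatten_cons, flatten_map_singleton]
        rw [List.cons_append, List.nodup_cons, List.nodup_append']
        refine ⟨?_, hlnd, (R.erase r).nodup_toList, ?_⟩
        · simp only [List.mem_append, Finset.mem_toList]
          rintro (h | h)
          · exact hdisj r h hrR
          · exact (Finset.notMem_erase r R) h
        · intro x hx hx2
          exact hdisj x hx (Finset.mem_of_mem_erase (Finset.mem_toList.1 hx2))
      · intro x
        simp only [List.flatten_cons, flatten_map_singleton, List.cons_append, List.mem_cons,
          List.mem_append, Finset.mem_toList]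
        by_cases hxr : x = r
        · exact Or.inl hxr
        · rcases hcover x with h | h
          · exact Or.inr (Or.inl h)
          · exact Or.inr (Or.inr (Finset.mem_erase.2 ⟨hxr, h⟩))
      · simp only [List.length_cons, List.length_map, Finset.length_toList,
          Finset.card_erase_of_mem hrR]
        omega
    · by_cases ha : ∃ r ∈ R, ∃ r' ∈ R, H.Adj r r'
      · obtain ⟨r, hrR, r', hr'R, hadj⟩ := ha
        have hrr' : r ≠ r' := hadj.ne
        have hr2 : 2 ≤ R.card := Finset.one_lt_card.2 ⟨r, hrR, r', hr'R, hrr'⟩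
        have hr'mem : r' ∈ R.erase r := Finset.mem_erase.2 ⟨hrr'.symm, hr'R⟩
        refine ⟨l :: [r, r'] :: ((R.erase r).erase r').toList.map (fun x => [x]), ?_, ?_, ?_, ?_⟩
        · intro B hB
          rcases List.mem_cons.1 hB with rfl | hB
          · exact hc
          rcases List.mem_cons.1 hB with rfl | hB
          · simp [hadj]
          · obtain ⟨x, _, rfl⟩ := List.mem_map.1 hB
            simp
        · simp only [List.flatten_cons, flatten_map_singleton]
          rw [List.nodup_append']
          refine ⟨hlnd, ?_, ?_⟩
          · rw [List.cons_append, List.cons_append, List.nil_append,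
              List.nodup_cons, List.nodup_cons]
            refine ⟨?_, ?_, Finset.nodup_toList _⟩
            · simp only [List.mem_cons, Finset.mem_toList, not_or]
              exact ⟨hrr', fun h =>
                Finset.notMem_erase r (R.erase r')
                  (by simpa [Finset.erase_right_comm] using h)⟩
            · simp only [Finset.mem_toList]
              exact Finset.notMem_erase r' (R.erase r)
          · intro x hx hx2
            rcases List.mem_append.1 hx2 with h' | h'
            · rcases List.mem_cons.1 h' with rfl | h'
              · exact hdisj x hx hrR
              · rcases List.mem_cons.1 h' with rfl | h'
                · exact hdisj x hx hr'R
                · simp at h'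
            · exact hdisj x hx
                (Finset.mem_of_mem_erase (Finset.mem_of_mem_erase (Finset.mem_toList.1 h')))
        · intro x
          simp only [List.flatten_cons, flatten_map_singleton, List.mem_append, List.mem_cons,
            List.not_mem_nil, or_false, Finset.mem_toList]
          rcases hcover x with h | h
          · exact Or.inl h
          · right
            by_cases hxr : x = r
            · exact Or.inl (Or.inl hxr)
            by_cases hxr' : x = r'
            · exact Or.inl (Or.inr hxr')
            · exact Or.inr (Finset.mem_erase.2 ⟨hxr', Finset.mem_erase.2 ⟨hxr, h⟩⟩)
        · simp only [List.length_cons, List.length_map, Finset.length_toList,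
            Finset.card_erase_of_mem hr'mem, Finset.card_erase_of_mem hrR]
          omega
      · exfalso
        have hRne : R.Nonempty := by
          rw [← Finset.card_pos, hRbig]; omega
        obtain ⟨r, hrR⟩ := hRne
        have hkey : H.neighborFinset r ⊆ (l.toFinset.erase w0).erase e := by
          intro x hx
          rw [SimpleGraph.mem_neighborFinset] at hx
          have hxR : x ∉ R := by
            intro hxR
            exact ha ⟨r, hrR, x, hxR, hx⟩
          have hxl : x ∈ l := (hmem' x).2 hxR
          have hxw0 : x ≠ w0 := by
            rintro rfl
            exact hb ⟨r, hrR, hx⟩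
          have hxe : x ≠ e := by
            rintro rfl
            exact hR r hrR hx.symm
          exact Finset.mem_erase.2 ⟨hxe, Finset.mem_erase.2 ⟨hxw0, List.mem_toFinset.2 hxl⟩⟩
        have hcard := Finset.card_le_card hkey
        rw [hreg r, Finset.card_erase_of_mem, Finset.card_erase_of_mem] at hcard
        · omega
        · exact List.mem_toFinset.2 hw0l
        · exact Finset.mem_erase.2 ⟨(Ne.symm hw0e), List.mem_toFinset.2 hel⟩


/-- Path cover of `Fin kh` minus an avoided set, with a path starting at `wu`. -/
lemma cover1 (H : SimpleGraph (Fin kh)) (hs3 : 3 ≤ s) (hsk : s ≤ kh)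
    (hreg : ∀ v, (H.neighborFinset v).card = kh + 1 - s)
    (wu : Fin kh) (A0 : Finset (Fin kh)) (hwu : wu ∉ A0) :
    ∃ (l : List (Fin kh)) (LS : List (List (Fin kh))),
      l.head? = some wu ∧ l.IsChain H.Adj ∧
      (∀ B ∈ LS, B.IsChain H.Adj) ∧
      (l ++ LS.flatten).Nodup ∧
      (∀ x, x ∈ l ++ LS.flatten ↔ x ∉ A0) ∧
      LS.length + 2 ≤ s := by
  obtain ⟨l, R, e, hh, hl, hc, hnd, hRS, hmem, hR⟩ :=
    greedy H (Finset.univ \ insert wu A0) wu (by simp)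
  have hdisj : ∀ x ∈ l, x ∉ R := fun x hx => ((hmem x).1 hx).2
  have hRnb := R_sub_nbar H hl hdisj hR
  have hRcard : R.card ≤ s - 2 := by
    have := Finset.card_le_card hRnb
    rwa [nbar_card H hs3 hsk hreg e] at this
  refine ⟨l, R.toList.map (fun r => [r]), hh, hc, ?_, ?_, ?_, ?_⟩
  · intro B hB
    obtain ⟨x, _, rfl⟩ := List.mem_map.1 hB
    simp
  · rw [flatten_map_singleton, List.nodup_append']
    exact ⟨hnd, R.nodup_toList, fun x hx hx2 => hdisj x hx (Finset.mem_toList.1 hx2)⟩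
  · intro x
    rw [flatten_map_singleton]
    simp only [List.mem_append, Finset.mem_toList]
    constructor
    · rintro (h | h)
      · rcases ((hmem x).1 h).1 with rfl | h1
        · exact hwu
        · rw [Finset.mem_sdiff, Finset.mem_insert] at h1
          intro hA0
          exact h1.2 (Or.inr hA0)
      · have h2 := hRS h
        rw [Finset.mem_sdiff, Finset.mem_insert] at h2
        intro hA0
        exact h2.2 (Or.inr hA0)
    · intro hA0
      by_cases hxR : x ∈ R
      · exact Or.inr hxR
      · left
        apply (hmem x).2
        refine ⟨?_, hxR⟩
        by_cases hxw : x = wu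
        · exact Or.inl hxw
        · refine Or.inr ?_
          rw [Finset.mem_sdiff, Finset.mem_insert]
          exact ⟨Finset.mem_univ _, by tauto⟩
  · rw [List.length_map, Finset.length_toList]
    omega

end Cover


lemma master [DecidableEq V] (G : SimpleGraph V) (u v : V)
    (pre tail cs : List V) (Bs : List (List V))
    (hlen : cs.length = Bs.length)
    (hpre : pre.IsChain G.Adj) (htail : tail.IsChain G.Adj)
    (hBs : ∀ B ∈ Bs, B.IsChain G.Adj)
    (hcs : ∀ c ∈ cs, ∀ y, y ≠ c → G.Adj c y)
    (hth : ∀ z ∈ tail.head?, ∀ y, y ≠ z → G.Adj z y)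
    (hnd : (pre ++ (cs ++ Bs.flatten) ++ tail).Nodup)
    (hcov : ∀ x, x ∈ pre ++ (cs ++ Bs.flatten) ++ tail)
    (hhead : (pre ++ glue cs Bs ++ tail).head? = some u)
    (hlast : tail.getLast? = some v) :
    ∃ p : G.Walk u v, p.IsHamiltonian := by
  have htail_ne : tail ≠ [] := by rintro rfl; simp at hlast
  have hperm : (pre ++ glue cs Bs ++ tail) ~ (pre ++ (cs ++ Bs.flatten) ++ tail) :=
    List.Perm.append (List.Perm.append (List.Perm.refl pre) (glue_perm cs Bs hlen))
      (List.Perm.refl tail)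
  have hndL : (pre ++ glue cs Bs ++ tail).Nodup := hperm.nodup_iff.2 hnd
  have hcovL : ∀ x, x ∈ pre ++ glue cs Bs ++ tail := fun x => hperm.mem_iff.2 (hcov x)
  have hnd1 : (pre ++ glue cs Bs).Nodup := (List.nodup_append'.1 hndL).1
  have hdisj1 : (pre ++ glue cs Bs).Disjoint tail := (List.nodup_append'.1 hndL).2.2
  have hndglue : (glue cs Bs).Nodup := (List.nodup_append'.1 hnd1).2.1
  have hdisj2 : pre.Disjoint (glue cs Bs) := (List.nodup_append'.1 hnd1).2.2
  have hchain : (pre ++ glue cs Bs ++ tail).IsChain G.Adj := by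
    rw [List.isChain_append]
    refine ⟨?_, htail, ?_⟩
    · rw [List.isChain_append]
      refine ⟨hpre, glue_chain' G cs Bs hlen hcs hBs hndglue, ?_⟩
      · intro x hx y hy
        rw [glue_head cs Bs hlen] at hy
        have hyc : y ∈ cs := List.mem_of_mem_head? hy
        have hyg : y ∈ glue cs Bs := by
          rw [← glue_head cs Bs hlen] at hy
          exact List.mem_of_mem_head? hy
        have hxp : x ∈ pre := List.mem_of_mem_getLast? hx
        have hne : x ≠ y := fun h => hdisj2 hxp (h ▸ hyg)
        exact (hcs y hyc x hne).symm
    · intro x hx y hy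
      have hxm : x ∈ pre ++ glue cs Bs := List.mem_of_mem_getLast? hx
      have hym : y ∈ tail := List.mem_of_mem_head? hy
      have hne : x ≠ y := fun h => hdisj1 hxm (h ▸ hym)
      exact (hth y hy x hne).symm
  refine ham_of_list G u v (pre ++ glue cs Bs ++ tail) hchain hhead ?_ hndL hcovL
  rw [List.getLast?_append, hlast]
  rfl

section GraphFacts

variable {s m kh : ℕ}

abbrev GG (s m : ℕ) (H : SimpleGraph (Fin kh)) : SimpleGraph (Fin s ⊕ (Fin m ⊕ Fin kh)) :=
  graphJoin (⊤ : SimpleGraph (Fin s)) ((⊤ : SimpleGraph (Fin m)) ⊕g H)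

variable (H : SimpleGraph (Fin kh))

lemma adj_univA (a : Fin s) (y : Fin s ⊕ (Fin m ⊕ Fin kh)) (hne : y ≠ Sum.inl a) :
    (GG s m H).Adj (Sum.inl a) y := by
  cases y with
  | inl b =>
    left
    exact fun h => hne (by rw [h])
  | inr x =>
    right
    rw [SimpleGraph.fromRel_adj]
    exact ⟨by simp, Or.inl (by simp)⟩

def notW : Fin s ⊕ (Fin m ⊕ Fin kh) → Prop
  | Sum.inr (Sum.inr _) => False
  | _ => True

lemma adj_clique (x y : Fin s ⊕ (Fin m ⊕ Fin kh)) (hx : notW x) (hy : notW y)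
    (hne : x ≠ y) : (GG s m H).Adj x y := by
  cases x with
  | inl a => exact adj_univA H a y (Ne.symm hne)
  | inr x' =>
    cases x' with
    | inr w => exact absurd hx (by simp [notW])
    | inl i =>
      cases y with
      | inl b => exact ((adj_univA H b _ hne).symm)
      | inr y' =>
        cases y' with
        | inr w => exact absurd hy (by simp [notW])
        | inl j =>
          left
          exact fun h => hne (by rw [h])

lemma adj_W (w w' : Fin kh) (h : H.Adj w w') :
    (GG s m H).Adj (Sum.inr (Sum.inr w)) (Sum.inr (Sum.inr w')) := by
  left
  exact h

lemma assemble2 [inst : DecidableEq (Fin s ⊕ (Fin m ⊕ Fin kh))] (u v : Fin s ⊕ (Fin m ⊕ Fin kh))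
    (pre tail : List (Fin s ⊕ (Fin m ⊕ Fin kh))) (cl : List (Fin s))
    (WBs : List (List (Fin kh)))
    (hlen : cl.length = WBs.length + 1)
    (hclnd : cl.Nodup)
    (hpre : pre.IsChain (GG s m H).Adj)
    (hprend : pre.Nodup)
    (htail : tail.IsChain (GG s m H).Adj)
    (htailnd : tail.Nodup)
    (hWBs : ∀ B ∈ WBs, B.IsChain H.Adj)
    (hWnd : WBs.flatten.Nodup)
    (hth : ∀ z ∈ tail.head?, ∀ y, y ≠ z → (GG s m H).Adj z y)
    (hlast : tail.getLast? = some v)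
    (hhead : pre.head? = some u ∨ (pre = [] ∧ ∃ a, u = Sum.inl a ∧ cl.head? = some a))
    (hd_pc : ∀ a ∈ cl, Sum.inl a ∉ pre)
    (hd_pW : ∀ w ∈ WBs.flatten, Sum.inr (Sum.inr w) ∉ pre)
    (hd_pt : pre.Disjoint tail)
    (hd_ct : ∀ a ∈ cl, Sum.inl a ∉ tail)
    (hd_Wt : ∀ w ∈ WBs.flatten, Sum.inr (Sum.inr w) ∉ tail)
    (hWcov : ∀ w : Fin kh,
      Sum.inr (Sum.inr w) ∈ pre ∨ w ∈ WBs.flatten ∨ Sum.inr (Sum.inr w) ∈ tail) :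
    ∃ p : (GG s m H).Walk u v, p.IsHamiltonian := by
  classical
  let fW : Fin kh → (Fin s ⊕ (Fin m ⊕ Fin kh)) := fun w => Sum.inr (Sum.inr w)
  have hfWinj : Function.Injective fW :=
    fun a b h => Sum.inr_injective (Sum.inr_injective h)
  let cs : List (Fin s ⊕ (Fin m ⊕ Fin kh)) := cl.map Sum.inl
  let Wf : List (Fin s ⊕ (Fin m ⊕ Fin kh)) := WBs.flatten.map fW
  let L0 : List (Fin s ⊕ (Fin m ⊕ Fin kh)) := pre ++ cs ++ Wf ++ tail
  letI : DecidablePred (fun x : Fin s ⊕ (Fin m ⊕ Fin kh) => x ∉ L0) :=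
    fun x => Classical.propDecidable _
  let X : List (Fin s ⊕ (Fin m ⊕ Fin kh)) := (Finset.univ.filter (fun x : Fin s ⊕ (Fin m ⊕ Fin kh) => x ∉ L0)).toList
  let Bs : List (List (Fin s ⊕ (Fin m ⊕ Fin kh))) := WBs.map (List.map fW) ++ [X]
  have hXmem : ∀ x, x ∈ X ↔ x ∉ L0 := by
    intro x
    simp [X]
  have hmemL0 : ∀ x, x ∈ L0 ↔ x ∈ pre ∨ x ∈ cs ∨ x ∈ Wf ∨ x ∈ tail := by
    intro x
    simp [L0, List.mem_append, or_assoc]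
  have hXnd : X.Nodup := Finset.nodup_toList _
  have hXnW : ∀ x ∈ X, notW x := by
    intro x hx
    rw [hXmem] at hx
    cases x with
    | inl a => trivial
    | inr x' =>
      cases x' with
      | inl i => trivial
      | inr w =>
        exfalso
        apply hx
        rw [hmemL0]
        rcases hWcov w with h | h | h
        · exact Or.inl h
        · exact Or.inr (Or.inr (Or.inl (List.mem_map.2 ⟨w, h, rfl⟩)))
        · exact Or.inr (Or.inr (Or.inr h))
  have hlen' : cs.length = Bs.length := by
    simp [cs, Bs, hlen]
  have hBsf : Bs.flatten = Wf ++ X := by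
    simp [Bs, Wf, List.flatten_append]
  have hBsch : ∀ B ∈ Bs, B.IsChain (GG s m H).Adj := by
    intro B hB
    rcases List.mem_append.1 hB with hB | hB
    · obtain ⟨B0, hB0, rfl⟩ := List.mem_map.1 hB
      exact List.isChain_map_of_isChain fW (fun a b h => adj_W H a b h) (hWBs B0 hB0)
    · have : B = X := by simpa using hB
      subst this
      exact List.Pairwise.isChain
        (List.Pairwise.imp_of_mem
          (fun {a b} ha hb hne => adj_clique H a b (hXnW a ha) (hXnW b hb) hne) hXnd)
  have hcsu : ∀ c ∈ cs, ∀ y, y ≠ c → (GG s m H).Adj c y := by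
    intro c hc y hy
    obtain ⟨a, _, rfl⟩ := List.mem_map.1 hc
    exact adj_univA H a y hy
  -- nodup of full list
  have hcsnd : cs.Nodup := hclnd.map Sum.inl_injective
  have hWfnd : Wf.Nodup := hWnd.map hfWinj
  have hcsWf : ∀ x, x ∈ cs → x ∉ Wf := by
    intro x hx hx2
    obtain ⟨a, _, rfl⟩ := List.mem_map.1 hx
    obtain ⟨w, _, hw⟩ := List.mem_map.1 hx2
    simp [fW] at hw
  have hXL0 : ∀ x, x ∈ X → x ∉ L0 := fun x hx => (hXmem x).1 hx
  have hnd : (pre ++ (cs ++ Bs.flatten) ++ tail).Nodup := by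
    rw [hBsf, List.nodup_append']
    refine ⟨?_, htailnd, ?_⟩
    · rw [List.nodup_append']
      refine ⟨hprend, ?_, ?_⟩
      · rw [List.nodup_append']
        refine ⟨hcsnd, ?_, ?_⟩
        · rw [List.nodup_append']
          refine ⟨hWfnd, hXnd, ?_⟩
          · intro x hx hx2
            exact hXL0 x hx2 ((hmemL0 x).2 (Or.inr (Or.inr (Or.inl hx))))
        · intro x hx hx2
          rcases List.mem_append.1 hx2 with h | h
          · exact hcsWf x hx h
          · exact hXL0 x h ((hmemL0 x).2 (Or.inr (Or.inl hx)))
      · intro x hx hx2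
        rcases List.mem_append.1 hx2 with h | h
        · obtain ⟨a, ha, rfl⟩ := List.mem_map.1 h
          exact hd_pc a ha hx
        · rcases List.mem_append.1 h with h' | h'
          · obtain ⟨w, hw, rfl⟩ := List.mem_map.1 h'
            exact hd_pW w hw hx
          · exact hXL0 x h' ((hmemL0 x).2 (Or.inl hx))
    · intro x hx hx2
      rcases List.mem_append.1 hx with h | h
      · exact hd_pt h hx2
      · rcases List.mem_append.1 h with h' | h'
        · obtain ⟨a, ha, rfl⟩ := List.mem_map.1 h'
          exact hd_ct a ha hx2
        · rcases List.mem_append.1 h' with h'' | h''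
          · obtain ⟨w, hw, rfl⟩ := List.mem_map.1 h''
            exact hd_Wt w hw hx2
          · exact hXL0 x h'' ((hmemL0 x).2 (Or.inr (Or.inr (Or.inr hx2))))
  have hcov : ∀ x, x ∈ pre ++ (cs ++ Bs.flatten) ++ tail := by
    intro x
    rw [hBsf]
    rcases Classical.em (x ∈ L0) with hx | hx
    · rw [hmemL0] at hx
      rcases hx with h | h | h | h
      · exact List.mem_append.2 (Or.inl (List.mem_append.2 (Or.inl h)))
      · exact List.mem_append.2 (Or.inl (List.mem_append.2 (Or.inr
          (List.mem_append.2 (Or.inl h)))))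
      · exact List.mem_append.2 (Or.inl (List.mem_append.2 (Or.inr
          (List.mem_append.2 (Or.inr (List.mem_append.2 (Or.inl h)))))))
      · exact List.mem_append.2 (Or.inr h)
    · exact List.mem_append.2 (Or.inl (List.mem_append.2 (Or.inr
        (List.mem_append.2 (Or.inr (List.mem_append.2 (Or.inr ((hXmem x).2 hx))))))))
  have hhead' : (pre ++ glue cs Bs ++ tail).head? = some u := by
    rcases hhead with h | ⟨hnil, a, rfl, hcl⟩
    · rw [List.append_assoc, List.head?_append, h]
      rfl
    · rw [hnil]
      simp only [List.nil_append]
      rw [List.head?_append, glue_head cs Bs hlen']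
      have : cs.head? = some (Sum.inl a) := by
        simp [cs, List.head?_map, hcl]
      rw [this]
      rfl
  exact master (GG s m H) u v pre tail cs Bs hlen' hpre htail hBsch hcsu hth hnd hcov hhead' hlast

lemma fW_inj :
    Function.Injective (fun w : Fin kh => (Sum.inr (Sum.inr w) : Fin s ⊕ (Fin m ⊕ Fin kh))) :=
  fun a b h => Sum.inr_injective (Sum.inr_injective h)

lemma take_props (T : Finset (Fin s)) (t : ℕ) (ht : t ≤ T.card) :
    (T.toList.take t).length = t ∧ (T.toList.take t).Nodup ∧
      ∀ a ∈ T.toList.take t, a ∈ T := by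
  refine ⟨?_, (T.nodup_toList).sublist (List.take_sublist _ _), ?_⟩
  · rw [List.length_take, Finset.length_toList, min_eq_left ht]
  · intro a ha
    exact Finset.mem_toList.1 (List.mem_of_mem_take ha)

lemma case1 [inst : DecidableEq (Fin s ⊕ (Fin m ⊕ Fin kh))] (hs3 : 3 ≤ s) (hsk : s ≤ kh)
    (hreg : ∀ v, (H.neighborFinset v).card = kh + 1 - s)
    (wu : Fin kh) (v : Fin s ⊕ (Fin m ⊕ Fin kh)) (hne : Sum.inr (Sum.inr wu) ≠ v) :
    ∃ p : (GG s m H).Walk (Sum.inr (Sum.inr wu)) v, p.IsHamiltonian := by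
  classical
  rcases v with va | vmw
  · -- v = Sum.inl va
    obtain ⟨l, LS, hh, hc, hLS, hnd, hmem, hlen⟩ := cover1 H hs3 hsk hreg wu ∅ (by simp)
    have hcard : LS.length + 1 ≤ ((Finset.univ : Finset (Fin s)).erase va).card := by
      rw [Finset.card_erase_of_mem (Finset.mem_univ va), Finset.card_univ, Fintype.card_fin]
      omega
    obtain ⟨hcllen, hclnd, hclmem⟩ := take_props _ _ hcard
    set cl := (((Finset.univ : Finset (Fin s)).erase va).toList.take (LS.length + 1)) with hcl
    have hndl : l.Nodup := (List.nodup_append'.1 hnd).1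
    have hndf : LS.flatten.Nodup := (List.nodup_append'.1 hnd).2.1
    have hdlf : l.Disjoint LS.flatten := (List.nodup_append'.1 hnd).2.2
    apply assemble2 H _ (Sum.inl va)
      (l.map (fun w => Sum.inr (Sum.inr w))) [Sum.inl va] cl LS hcllen hclnd
    · exact List.isChain_map_of_isChain _ (fun a b h => adj_W H a b h) hc
    · exact hndl.map fW_inj
    · simp
    · simp
    · exact hLS
    · exact hndf
    · intro z hz y hy
      simp only [List.head?_cons, Option.mem_def, Option.some.injEq] at hz
      subst hz
      exact adj_univA H va y hy
    · simp
    · left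
      rw [List.head?_map, hh]
      rfl
    · intro a _ hmem2
      obtain ⟨w, _, hw⟩ := List.mem_map.1 hmem2
      simp at hw
    · intro w hw hmem2
      obtain ⟨w', hw', he⟩ := List.mem_map.1 hmem2
      have : w' = w := fW_inj he
      subst this
      exact hdlf hw' hw
    · intro x hx hx2
      simp only [List.mem_singleton] at hx2
      subst hx2
      obtain ⟨w, _, hw⟩ := List.mem_map.1 hx
      simp at hw
    · intro a ha hmem2
      simp only [List.mem_singleton, Sum.inl.injEq] at hmem2
      subst hmem2
      exact (Finset.mem_erase.1 (hclmem a ha)).1 rfl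
    · intro w _ hmem2
      simp at hmem2
    · intro w
      have := (hmem w).2 (by simp)
      rcases List.mem_append.1 this with h | h
      · exact Or.inl (List.mem_map.2 ⟨w, h, rfl⟩)
      · exact Or.inr (Or.inl h)
  rcases vmw with vi | wv
  · -- v = Sum.inr (Sum.inl vi)
    obtain ⟨l, LS, hh, hc, hLS, hnd, hmem, hlen⟩ := cover1 H hs3 hsk hreg wu ∅ (by simp)
    have hcard : LS.length + 2 ≤ (Finset.univ : Finset (Fin s)).card := by
      rw [Finset.card_univ, Fintype.card_fin]
      omega
    obtain ⟨hFlen, hFnd, _⟩ := take_props _ _ hcard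
    set F := ((Finset.univ : Finset (Fin s)).toList.take (LS.length + 2)) with hF
    obtain ⟨c, hcF⟩ : ∃ c, F.drop (LS.length + 1) = [c] := by
      rw [← List.length_eq_one_iff]
      rw [List.length_drop, hFlen]
      omega
    have hFsplit : F.take (LS.length + 1) ++ [c] = F := by
      rw [← hcF, List.take_append_drop]
    set cl := F.take (LS.length + 1) with hcl
    have hcllen : cl.length = LS.length + 1 := by
      rw [hcl, List.length_take, hFlen]
      omega
    have hclnd : cl.Nodup := hFnd.sublist (List.take_sublist _ _)
    have hccl : c ∉ cl := by
      intro hcin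
      have := hFsplit ▸ hFnd
      rw [List.nodup_append'] at this
      exact this.2.2 hcin (by simp)
    have hndl : l.Nodup := (List.nodup_append'.1 hnd).1
    have hndf : LS.flatten.Nodup := (List.nodup_append'.1 hnd).2.1
    have hdlf : l.Disjoint LS.flatten := (List.nodup_append'.1 hnd).2.2
    apply assemble2 H _ (Sum.inr (Sum.inl vi))
      (l.map (fun w => Sum.inr (Sum.inr w))) [Sum.inl c, Sum.inr (Sum.inl vi)] cl LS hcllen hclnd
    · exact List.isChain_map_of_isChain _ (fun a b h => adj_W H a b h) hc
    · exact hndl.map fW_inj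
    · refine List.isChain_cons_cons.2 ⟨adj_univA H c _ (by simp), by simp⟩
    · simp
    · exact hLS
    · exact hndf
    · intro z hz y hy
      simp only [List.head?_cons, Option.mem_def, Option.some.injEq] at hz
      subst hz
      exact adj_univA H c y hy
    · simp
    · left
      rw [List.head?_map, hh]
      rfl
    · intro a _ hmem2
      obtain ⟨w, _, hw⟩ := List.mem_map.1 hmem2
      simp at hw
    · intro w hw hmem2
      obtain ⟨w', hw', he⟩ := List.mem_map.1 hmem2
      have : w' = w := fW_inj he
      subst this
      exact hdlf hw' hw
    · intro x hx hx2
      obtain ⟨w, _, hw⟩ := List.mem_map.1 hx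
      rcases List.mem_cons.1 hx2 with h | h
      · rw [h] at hw
        simp at hw
      · simp only [List.mem_singleton] at h
        rw [h] at hw
        simp at hw
    · intro a ha hmem2
      rcases List.mem_cons.1 hmem2 with h | h
      · have : a = c := by simpa using h
        exact hccl (this ▸ ha)
      · simp at h
    · intro w _ hmem2
      simp at hmem2
    · intro w
      have := (hmem w).2 (by simp)
      rcases List.mem_append.1 this with h | h
      · exact Or.inl (List.mem_map.2 ⟨w, h, rfl⟩)
      · exact Or.inr (Or.inl h)
  · -- v = Sum.inr (Sum.inr wv)
    have hwv : wu ≠ wv := by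
      intro h
      exact hne (by rw [h])
    obtain ⟨l, LS, hh, hc, hLS, hnd, hmem, hlen⟩ :=
      cover1 H hs3 hsk hreg wu {wv} (by simp [hwv])
    have hcard : LS.length + 2 ≤ (Finset.univ : Finset (Fin s)).card := by
      rw [Finset.card_univ, Fintype.card_fin]
      omega
    obtain ⟨hFlen, hFnd, _⟩ := take_props _ _ hcard
    set F := ((Finset.univ : Finset (Fin s)).toList.take (LS.length + 2)) with hF
    obtain ⟨c, hcF⟩ : ∃ c, F.drop (LS.length + 1) = [c] := by
      rw [← List.length_eq_one_iff]
      rw [List.length_drop, hFlen]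
      omega
    have hFsplit : F.take (LS.length + 1) ++ [c] = F := by
      rw [← hcF, List.take_append_drop]
    set cl := F.take (LS.length + 1) with hcl
    have hcllen : cl.length = LS.length + 1 := by
      rw [hcl, List.length_take, hFlen]
      omega
    have hclnd : cl.Nodup := hFnd.sublist (List.take_sublist _ _)
    have hccl : c ∉ cl := by
      intro hcin
      have := hFsplit ▸ hFnd
      rw [List.nodup_append'] at this
      exact this.2.2 hcin (by simp)
    have hndl : l.Nodup := (List.nodup_append'.1 hnd).1
    have hndf : LS.flatten.Nodup := (List.nodup_append'.1 hnd).2.1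
    have hdlf : l.Disjoint LS.flatten := (List.nodup_append'.1 hnd).2.2
    have hwvnot : wv ∉ l ++ LS.flatten := by
      intro h
      exact ((hmem wv).1 h) (by simp)
    apply assemble2 H _ (Sum.inr (Sum.inr wv))
      (l.map (fun w => Sum.inr (Sum.inr w))) [Sum.inl c, Sum.inr (Sum.inr wv)] cl LS hcllen hclnd
    · exact List.isChain_map_of_isChain _ (fun a b h => adj_W H a b h) hc
    · exact hndl.map fW_inj
    · refine List.isChain_cons_cons.2 ⟨adj_univA H c _ (by simp), by simp⟩
    · simp
    · exact hLS
    · exact hndf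
    · intro z hz y hy
      simp only [List.head?_cons, Option.mem_def, Option.some.injEq] at hz
      subst hz
      exact adj_univA H c y hy
    · simp
    · left
      rw [List.head?_map, hh]
      rfl
    · intro a _ hmem2
      obtain ⟨w, _, hw⟩ := List.mem_map.1 hmem2
      simp at hw
    · intro w hw hmem2
      obtain ⟨w', hw', he⟩ := List.mem_map.1 hmem2
      have : w' = w := fW_inj he
      subst this
      exact hdlf hw' hw
    · intro x hx hx2
      obtain ⟨w, hwl, hw⟩ := List.mem_map.1 hx
      rcases List.mem_cons.1 hx2 with h | h
      · rw [h] at hw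
        simp at hw
      · simp only [List.mem_singleton] at h
        rw [h] at hw
        have : w = wv := Sum.inr_injective (Sum.inr_injective hw)
        subst this
        exact hwvnot (List.mem_append.2 (Or.inl hwl))
    · intro a ha hmem2
      rcases List.mem_cons.1 hmem2 with h | h
      · have : a = c := by simpa using h
        exact hccl (this ▸ ha)
      · simp at h
    · intro w hw hmem2
      rcases List.mem_cons.1 hmem2 with h | h
      · simp at h
      · simp only [List.mem_singleton, Sum.inr.injEq] at h
        have : w = wv := by simpa using h
        subst this
        exact hwvnot (List.mem_append.2 (Or.inr hw))
    · intro w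
      by_cases hwwv : w = wv
      · subst hwwv
        exact Or.inr (Or.inr (by simp))
      · have := (hmem w).2 (by simp [hwwv])
        rcases List.mem_append.1 this with h | h
        · exact Or.inl (List.mem_map.2 ⟨w, h, rfl⟩)
        · exact Or.inr (Or.inl h)

lemma case2 [inst : DecidableEq (Fin s ⊕ (Fin m ⊕ Fin kh))] (hs3 : 3 ≤ s) (hsk : s ≤ kh)
    (hreg : ∀ v, (H.neighborFinset v).card = kh + 1 - s)
    (u v : Fin s ⊕ (Fin m ⊕ Fin kh)) (hne : u ≠ v) (hu : notW u) (hv : notW v) :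
    ∃ p : (GG s m H).Walk u v, p.IsHamiltonian := by
  classical
  obtain ⟨LS, hLS, hndf, hcov, hlen⟩ := cover2 H hs3 hsk hreg
  set t := LS.length with ht
  have hWcov2 : ∀ w : Fin kh, w ∈ LS.flatten := hcov
  rcases u with ua | umw
  · rcases v with va | vmw
    · -- u = inl ua, v = inl va
      have hav : ua ≠ va := fun h => hne (by rw [h])
      have hcard : t ≤ (((Finset.univ : Finset (Fin s)).erase ua).erase va).card := by
        rw [Finset.card_erase_of_mem (Finset.mem_erase.2 ⟨Ne.symm hav, Finset.mem_univ va⟩),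
          Finset.card_erase_of_mem (Finset.mem_univ ua), Finset.card_univ, Fintype.card_fin]
        omega
      obtain ⟨hcllen, hclnd, hclmem⟩ := take_props _ _ hcard
      set cl' := ((((Finset.univ : Finset (Fin s)).erase ua).erase va).toList.take t) with hcl'
      have hua : ua ∉ cl' := by
        intro h
        have := hclmem ua h
        rw [Finset.mem_erase, Finset.mem_erase] at this
        exact this.2.1 rfl
      apply assemble2 H _ (Sum.inl va) [] [Sum.inl va] (ua :: cl') LS
        (by simp [hcllen, ht]) (List.nodup_cons.2 ⟨hua, hclnd⟩)
      · simp
      · simp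
      · simp
      · simp
      · exact fun B hB => hLS B hB
      · exact hndf
      · intro z hz y hy
        simp only [List.head?_cons, Option.mem_def, Option.some.injEq] at hz
        subst hz
        exact adj_univA H va y hy
      · simp
      · exact Or.inr ⟨rfl, ua, rfl, rfl⟩
      · simp
      · simp
      · simp
      · intro a ha hmem2
        simp only [List.mem_singleton, Sum.inl.injEq] at hmem2
        subst hmem2
        rcases List.mem_cons.1 ha with h | h
        · exact hav h.symm
        · have := hclmem a h
          rw [Finset.mem_erase] at this
          exact this.1 rfl
      · simp
      · exact fun w => Or.inr (Or.inl (hWcov2 w))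
    rcases vmw with vi | wv
    · -- u = inl ua, v = inr (inl vi)
      have hcard : t + 1 ≤ ((Finset.univ : Finset (Fin s)).erase ua).card := by
        rw [Finset.card_erase_of_mem (Finset.mem_univ ua), Finset.card_univ, Fintype.card_fin]
        omega
      obtain ⟨hFlen, hFnd, hFmem⟩ := take_props _ _ hcard
      set F := (((Finset.univ : Finset (Fin s)).erase ua).toList.take (t + 1)) with hF
      obtain ⟨c, hcF⟩ : ∃ c, F.drop t = [c] := by
        rw [← List.length_eq_one_iff, List.length_drop, hFlen]
        omega
      have hFsplit : F.take t ++ [c] = F := by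
        rw [← hcF, List.take_append_drop]
      set cl' := F.take t with hcl'
      have hcl'len : cl'.length = t := by
        rw [hcl', List.length_take, hFlen]
        omega
      have hcl'nd : cl'.Nodup := hFnd.sublist (List.take_sublist _ _)
      have hccl : c ∉ cl' := by
        intro hcin
        have := hFsplit ▸ hFnd
        rw [List.nodup_append'] at this
        exact this.2.2 hcin (by simp)
      have hcF' : c ∈ F := by
        rw [← hFsplit]
        simp
      have hcua : c ≠ ua := by
        have := hFmem c hcF'
        rw [Finset.mem_erase] at this
        exact this.1
      have hua : ua ∉ cl' := by
        intro h
        have := hFmem ua (List.mem_of_mem_take h)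
        rw [Finset.mem_erase] at this
        exact this.1 rfl
      apply assemble2 H _ (Sum.inr (Sum.inl vi)) [] [Sum.inl c, Sum.inr (Sum.inl vi)]
        (ua :: cl') LS (by simp [hcl'len, ht]) (List.nodup_cons.2 ⟨hua, hcl'nd⟩)
      · simp
      · simp
      · refine List.isChain_cons_cons.2 ⟨adj_univA H c _ (by simp), by simp⟩
      · simp
      · exact fun B hB => hLS B hB
      · exact hndf
      · intro z hz y hy
        simp only [List.head?_cons, Option.mem_def, Option.some.injEq] at hz
        subst hz
        exact adj_univA H c y hy
      · simp
      · exact Or.inr ⟨rfl, ua, rfl, rfl⟩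
      · simp
      · simp
      · simp
      · intro a ha hmem2
        rcases List.mem_cons.1 hmem2 with h | h
        · have hac : a = c := by simpa using h
          subst hac
          rcases List.mem_cons.1 ha with h' | h'
          · exact hcua h'
          · exact hccl h'
        · simp at h
      · simp
      · exact fun w => Or.inr (Or.inl (hWcov2 w))
    · -- u = inl ua, v = inr (inr wv) : impossible by hv
      exact absurd hv (by simp [notW])
  rcases umw with ui | wu
  · rcases v with va | vmw
    · -- u = inr (inl ui), v = inl va
      have hcard : t + 1 ≤ ((Finset.univ : Finset (Fin s)).erase va).card := by
        rw [Finset.card_erase_of_mem (Finset.mem_univ va), Finset.card_univ, Fintype.card_fin]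
        omega
      obtain ⟨hcllen, hclnd, hclmem⟩ := take_props _ _ hcard
      set cl := (((Finset.univ : Finset (Fin s)).erase va).toList.take (t + 1)) with hcl
      apply assemble2 H _ (Sum.inl va) [Sum.inr (Sum.inl ui)] [Sum.inl va] cl LS hcllen hclnd
      · simp
      · simp
      · simp
      · simp
      · exact fun B hB => hLS B hB
      · exact hndf
      · intro z hz y hy
        simp only [List.head?_cons, Option.mem_def, Option.some.injEq] at hz
        subst hz
        exact adj_univA H va y hy
      · simp
      · exact Or.inl rfl
      · simp
      · simp
      · simp
      · intro a ha hmem2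
        simp only [List.mem_singleton, Sum.inl.injEq] at hmem2
        subst hmem2
        have := hclmem a ha
        rw [Finset.mem_erase] at this
        exact this.1 rfl
      · simp
      · exact fun w => Or.inr (Or.inl (hWcov2 w))
    rcases vmw with vi | wv
    · -- u = inr (inl ui), v = inr (inl vi)
      have huivi : ui ≠ vi := fun h => hne (by rw [h])
      have hcard : t + 2 ≤ ((Finset.univ : Finset (Fin s))).card := by
        rw [Finset.card_univ, Fintype.card_fin]
        omega
      obtain ⟨hFlen, hFnd, hFmem⟩ := take_props _ _ hcard
      set F := (((Finset.univ : Finset (Fin s))).toList.take (t + 2)) with hF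
      obtain ⟨c, hcF⟩ : ∃ c, F.drop (t + 1) = [c] := by
        rw [← List.length_eq_one_iff, List.length_drop, hFlen]
        omega
      have hFsplit : F.take (t + 1) ++ [c] = F := by
        rw [← hcF, List.take_append_drop]
      set cl := F.take (t + 1) with hcl
      have hcllen : cl.length = t + 1 := by
        rw [hcl, List.length_take, hFlen]
        omega
      have hclnd : cl.Nodup := hFnd.sublist (List.take_sublist _ _)
      have hccl : c ∉ cl := by
        intro hcin
        have := hFsplit ▸ hFnd
        rw [List.nodup_append'] at this
        exact this.2.2 hcin (by simp)
      apply assemble2 H _ (Sum.inr (Sum.inl vi)) [Sum.inr (Sum.inl ui)]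
        [Sum.inl c, Sum.inr (Sum.inl vi)] cl LS hcllen hclnd
      · simp
      · simp
      · refine List.isChain_cons_cons.2 ⟨adj_univA H c _ (by simp), by simp⟩
      · simp
      · exact fun B hB => hLS B hB
      · exact hndf
      · intro z hz y hy
        simp only [List.head?_cons, Option.mem_def, Option.some.injEq] at hz
        subst hz
        exact adj_univA H c y hy
      · simp
      · exact Or.inl rfl
      · simp
      · simp
      · intro x hx hx2
        simp only [List.mem_singleton] at hx
        subst hx
        rcases List.mem_cons.1 hx2 with h | h
        · simp at h
        · simp only [List.mem_singleton, Sum.inr.injEq, Sum.inl.injEq] at h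
          exact huivi (by simpa using h)
      · intro a ha hmem2
        rcases List.mem_cons.1 hmem2 with h | h
        · have hac : a = c := by simpa using h
          exact hccl (hac ▸ ha)
        · simp at h
      · simp
      · exact fun w => Or.inr (Or.inl (hWcov2 w))
    · exact absurd hv (by simp [notW])
  · exact absurd hu (by simp [notW])

lemma rev_ham {V' : Type*} [DecidableEq V'] (G : SimpleGraph V') (u v : V')
    (h : ∃ p : G.Walk u v, p.IsHamiltonian) : ∃ p : G.Walk v u, p.IsHamiltonian := by
  obtain ⟨p, hp⟩ := h
  refine ⟨p.reverse, fun a => ?_⟩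
  rw [SimpleGraph.Walk.support_reverse, List.count_reverse]
  exact hp a

lemma main_ham (hs3 : 3 ≤ s) (hsk : s ≤ kh)
    (hreg : ∀ v, (H.neighborFinset v).card = kh + 1 - s) :
    HamConnected (GG s m H) := by
  intro u v hne
  letI instC : DecidableEq (Fin s ⊕ (Fin m ⊕ Fin kh)) := fun a b => Classical.propDecidable _
  rcases u with ua | (ui | wu)
  · rcases v with va | (vi | wv)
    · exact case2 H hs3 hsk hreg _ _ hne trivial trivial
    · exact case2 H hs3 hsk hreg _ _ hne trivial trivial
    · exact rev_ham _ _ _ (case1 H hs3 hsk hreg wv _ (Ne.symm hne))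
  · rcases v with va | (vi | wv)
    · exact case2 H hs3 hsk hreg _ _ hne trivial trivial
    · exact case2 H hs3 hsk hreg _ _ hne trivial trivial
    · exact rev_ham _ _ _ (case1 H hs3 hsk hreg wv _ (Ne.symm hne))
  · exact case1 H hs3 hsk hreg wu _ hne

end GraphFacts

end HamAux

/-- **Case `3 ≤ s ≤ k-1` of Theorem 3.1.** If `H` is a `(k-s)`-regular graph on `k-1`
vertices with `3 ≤ s ≤ k-1`, `k ≥ 2`, and `n ≥ 11k`, then
`K_s ∨ (K_{n-k-s+1} + H)` is Hamilton-connected. -/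
theorem join_regular_hamilton_connected (n k s : ℕ) (hk : 2 ≤ k)
    (hs : 3 ≤ s) (hsk : s ≤ k - 1) (hn : 11 * k ≤ n)
    (H : SimpleGraph (Fin (k - 1))) (hreg : ∀ v, gdeg H v = k - s) :
    HamConnected
      (graphJoin (⊤ : SimpleGraph (Fin s))
        ((⊤ : SimpleGraph (Fin (n - k - s + 1))) ⊕g H)) := by
  have hreg' : ∀ v : Fin (k - 1), (H.neighborFinset v).card = (k - 1) + 1 - s := by
    intro v
    have h1 := hreg v
    rw [gdeg] at h1
    have h2 : (H.neighborSet v).ncard = (H.neighborFinset v).card := by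
      rw [SimpleGraph.neighborFinset_def]
      exact Set.ncard_eq_toFinset_card' _
    rw [h2] at h1
    omega
  exact HamAux.main_ham H hs hsk hreg'

end
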